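/- Suppose σ = [p₀,…,p_k] and σ̃ = [p̃₀,…,p̃_k] are k-simplices in ℝ^m with |‖pᵢ − pⱼ‖ − ‖p̃ᵢ − p̃ⱼ‖| ≤ ξ₀·L(σ) for all i < j, where ξ₀ ≤ 2/3. Then there exists a rigid motion (isometry) Φ of ℝ^m such that, with p̂ᵢ = Φ(pᵢ), we have p̂₀ = p̃₀ and ‖p̂ᵢ − p̃ᵢ‖ ≤ 4√k·ξ₀·L(σ)/t(σ)² for all 1 ≤ i ≤ k. -/

import Mathlib

open Matrix Metric
open scoped Classical BigOperators

noncomputable section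

/-- Euclidean space ℝ^m. -/
abbrev E (m : ℕ) := EuclideanSpace ℝ (Fin m)

/-- Euclidean norm of a plain vector. -/
noncomputable def euclNorm {n : ℕ} (v : Fin n → ℝ) : ℝ := Real.sqrt (∑ i, v i ^ 2)

/-- Largest singular value (operator norm) of a matrix. -/
noncomputable def largeSV {m k : ℕ} (P : Matrix (Fin m) (Fin k) ℝ) : ℝ :=
  ⨆ x : {x : Fin k → ℝ // euclNorm x = 1}, euclNorm (P.mulVec x)

/-- Smallest singular value of a matrix. -/
noncomputable def smallSV {m k : ℕ} (P : Matrix (Fin m) (Fin k) ℝ) : ℝ :=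
  ⨅ x : {x : Fin k → ℝ // euclNorm x = 1}, euclNorm (P.mulVec x)

/-- Matrix of edge vectors pᵢ − p₀ of a k-simplex. -/
noncomputable def vertMatrix {m k : ℕ} (p : Fin (k+1) → E m) : Matrix (Fin m) (Fin k) ℝ :=
  fun a j => p j.succ a - p 0 a

/-- Pseudo-inverse (PᵀP)⁻¹Pᵀ of a matrix of full column rank. -/
noncomputable def pseudoInv {m k : ℕ} (P : Matrix (Fin m) (Fin k) ℝ) :
    Matrix (Fin k) (Fin m) ℝ := (Pᵀ * P)⁻¹ * Pᵀ

/-- Longest edge length of a simplex given by its vertices. -/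
noncomputable def longEdge {m k : ℕ} (p : Fin (k+1) → E m) : ℝ :=
  ⨆ i, ⨆ j, dist (p i) (p j)

/-- Altitude of vertex i: distance to affine hull of the opposite facet. -/
noncomputable def altitude {m k : ℕ} (p : Fin (k+1) → E m) (i : Fin (k+1)) : ℝ :=
  Metric.infDist (p i) (↑(affineSpan ℝ (p '' {j | j ≠ i})) : Set (E m))

/-- Thickness of a k-simplex: 1 if k = 0, else min altitude / (k · longest edge). -/
noncomputable def thickness {m k : ℕ} (p : Fin (k+1) → E m) : ℝ :=
  if k = 0 then 1 else (⨅ i, altitude p i) / (k * longEdge p)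

/-- Longest edge of a finite vertex set. -/
noncomputable def fLongEdge {m : ℕ} (s : Finset (E m)) : ℝ := Metric.diam (s : Set (E m))

/-- Minimal altitude of a finite vertex set. -/
noncomputable def fMinAlt {m : ℕ} (s : Finset (E m)) : ℝ :=
  ⨅ p : {p // p ∈ s},
    Metric.infDist (p : E m) (↑(affineSpan ℝ ((s.erase (p : E m)) : Set (E m))) : Set (E m))

/-- Thickness of a simplex given as a finite vertex set. -/
noncomputable def fThickness {m : ℕ} (s : Finset (E m)) : ℝ :=
  if s.card ≤ 1 then 1 else fMinAlt s / ((s.card - 1 : ℕ) * fLongEdge s)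

/-- A simplex (finite vertex set) is Γ₀-good if every j-face has thickness ≥ Γ₀^j. -/
def isGood {m : ℕ} (Γ₀ : ℝ) (s : Finset (E m)) : Prop :=
  ∀ t ⊆ s, t.Nonempty → fThickness t ≥ Γ₀ ^ (t.card - 1)

/-- A Γ₀-flake: not Γ₀-good, but every facet is Γ₀-good. -/
def isFlake {m : ℕ} (Γ₀ : ℝ) (s : Finset (E m)) : Prop :=
  ¬ isGood Γ₀ s ∧ ∀ p ∈ s, isGood Γ₀ (s.erase p)

open RealInnerProductSpace

set_option maxHeartbeats 1000000 in
lemma align {m : ℕ} (S : Submodule ℝ (E m)) (T : S →ₗ[ℝ] E m) (δ : ℝ) (hδ : 0 ≤ δ)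
    (hT : ∀ x : S, |‖T x‖ ^ 2 - ‖x‖ ^ 2| ≤ δ * ‖x‖ ^ 2) :
    ∃ Φ : E m ≃ₗᵢ[ℝ] E m, ∀ x : S, ‖Φ (x : E m) - T x‖ ≤ δ * ‖x‖ := by
  classical
  set d := Module.finrank ℝ S with hd
  have hdm : d ≤ m := by
    have := Submodule.finrank_le S
    rwa [finrank_euclideanSpace_fin] at this
  -- the symmetric operator T* T on S
  set G : S →ₗ[ℝ] S := (LinearMap.adjoint T) ∘ₗ T with hG
  have hGsym : G.IsSymmetric := by
    intro x y
    simp only [hG, LinearMap.comp_apply]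
    rw [LinearMap.adjoint_inner_left, LinearMap.adjoint_inner_right]
  set e : OrthonormalBasis (Fin d) ℝ S := hGsym.eigenvectorBasis rfl with he
  have hTe : ∀ i j : Fin d, i ≠ j → (⟪T (e i), T (e j)⟫ = 0) := by
    intro i j hij
    have h1 : ⟪G (e i), (e j : S)⟫ = ⟪T (e i), T (e j)⟫ := by
      simp only [hG, LinearMap.comp_apply]
      rw [LinearMap.adjoint_inner_left]
    have h2 : G (e i) = (hGsym.eigenvalues rfl i : ℝ) • e i := by
      exact hGsym.apply_eigenvectorBasis rfl i
    rw [h2] at h1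
    replace h1 := (real_inner_smul_left (e i) (e j) (hGsym.eigenvalues rfl i)).symm.trans h1
    rw [← h1]
    have := e.orthonormal.2 hij
    simp [this]
  set c : Fin d → ℝ := fun i => ‖T (e i)‖ with hc
  have hc1 : ∀ i, |c i - 1| ≤ δ := by
    intro i
    have hni : ‖(e i : S)‖ = 1 := e.orthonormal.1 i
    have := hT (e i)
    rw [hni] at this
    have hci : c i = ‖T (e i)‖ := rfl
    rw [← hci] at this
    norm_num at this
    have hcnn : 0 ≤ c i := norm_nonneg _
    have habs : |c i - 1| * (c i + 1) = |c i ^ 2 - 1| := by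
      rw [← abs_of_nonneg (by linarith : (0:ℝ) ≤ c i + 1), ← abs_mul]
      ring_nf
    nlinarith [abs_nonneg (c i - 1), mul_nonneg (abs_nonneg (c i - 1)) hcnn]
  -- extend (coe ∘ e) to an orthonormal basis B of E m
  have hcard : Module.finrank ℝ (E m) = Fintype.card (Fin m) := by
    simp [finrank_euclideanSpace_fin]
  set ve : Fin m → E m := fun j => if h : (j : ℕ) < d then (e ⟨j, h⟩ : E m) else 0 with hve
  have hve_on : Orthonormal ℝ (Set.restrict {j : Fin m | (j : ℕ) < d} ve) := by
    constructor
    · rintro ⟨j, hj⟩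
      have hj1 : (j : ℕ) < d := hj
      have h1 : ve j = (e ⟨(j : ℕ), hj1⟩ : E m) := by simp only [hve]; rw [dif_pos hj1]
      rw [Set.restrict, Set.restrict_apply, h1]
      exact e.orthonormal.1 ⟨(j : ℕ), hj1⟩
    · rintro ⟨j, hj⟩ ⟨j', hj'⟩ hne
      have hj1 : (j : ℕ) < d := hj
      have hj2 : (j' : ℕ) < d := hj'
      have hjj : j ≠ j' := by
        intro hcon; exact hne (Subtype.ext hcon)
      have hne' : (⟨(j : ℕ), hj1⟩ : Fin d) ≠ ⟨(j' : ℕ), hj2⟩ := by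
        intro hcon
        exact hjj (Fin.ext (Fin.mk_eq_mk.mp hcon))
      have h1 : ve j = (e ⟨(j : ℕ), hj1⟩ : E m) := by simp only [hve]; rw [dif_pos hj1]
      have h2 : ve j' = (e ⟨(j' : ℕ), hj2⟩ : E m) := by simp only [hve]; rw [dif_pos hj2]
      rw [Set.restrict, Set.restrict_apply, Set.restrict_apply, h1, h2]
      have h3 : (⟪e ⟨(j : ℕ), hj1⟩, e ⟨(j' : ℕ), hj2⟩⟫ : ℝ) = 0 := e.orthonormal.2 hne'
      rw [Submodule.coe_inner] at h3
      exact h3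
  obtain ⟨B, hB⟩ := hve_on.exists_orthonormalBasis_extension_of_card_eq hcard
  -- extend the normalized images to an orthonormal basis b of E m
  set vf : Fin m → E m := fun j =>
    if h : (j : ℕ) < d then ‖T (e ⟨j, h⟩)‖⁻¹ • T (e ⟨j, h⟩) else 0 with hvf
  set sf : Set (Fin m) := {j : Fin m | ∃ h : (j : ℕ) < d, T (e ⟨j, h⟩) ≠ 0} with hsf
  have hvf_on : Orthonormal ℝ (Set.restrict sf vf) := by
    constructor
    · rintro ⟨j, hj⟩
      obtain ⟨hj1, hjz⟩ := hj
      have h1 : vf j = ‖T (e ⟨(j : ℕ), hj1⟩)‖⁻¹ • T (e ⟨(j : ℕ), hj1⟩) := by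
        simp only [hvf]; rw [dif_pos hj1]
      rw [Set.restrict, Set.restrict_apply, h1]
      rw [norm_smul, norm_inv, norm_norm, inv_mul_cancel₀ (norm_ne_zero_iff.2 hjz)]
    · rintro ⟨j, hj⟩ ⟨j', hj'⟩ hne
      obtain ⟨hj1, hjz⟩ := hj
      obtain ⟨hj2, hjz'⟩ := hj'
      have hjj : j ≠ j' := by
        intro hcon; exact hne (Subtype.ext hcon)
      have hne' : (⟨(j : ℕ), hj1⟩ : Fin d) ≠ ⟨(j' : ℕ), hj2⟩ := by
        intro hcon
        exact hjj (Fin.ext (Fin.mk_eq_mk.mp hcon))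
      have h1 : vf j = ‖T (e ⟨(j : ℕ), hj1⟩)‖⁻¹ • T (e ⟨(j : ℕ), hj1⟩) := by
        simp only [hvf]; rw [dif_pos hj1]
      have h2 : vf j' = ‖T (e ⟨(j' : ℕ), hj2⟩)‖⁻¹ • T (e ⟨(j' : ℕ), hj2⟩) := by
        simp only [hvf]; rw [dif_pos hj2]
      rw [Set.restrict, Set.restrict_apply, Set.restrict_apply, h1, h2]
      rw [real_inner_smul_left, real_inner_smul_right, hTe _ _ hne']
      ring
  obtain ⟨b, hb⟩ := hvf_on.exists_orthonormalBasis_extension_of_card_eq hcard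
  set f : Fin d → E m := fun i => b (Fin.castLE hdm i) with hfdef
  have hf_on : Orthonormal ℝ f := b.orthonormal.comp _ (Fin.castLE_injective hdm)
  have hfB : ∀ i : Fin d, B (Fin.castLE hdm i) = (e i : E m) := by
    intro i
    have hmem : (Fin.castLE hdm i : Fin m) ∈ {j : Fin m | (j : ℕ) < d} := i.isLt
    rw [hB _ hmem, hve]
    simp only [dif_pos (show ((Fin.castLE hdm i : Fin m) : ℕ) < d from i.isLt)]
    congr
  have hf : ∀ i : Fin d, T (e i) = c i • f i := by
    intro i
    by_cases hz : T (e i) = 0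
    · simp [hz, hc, hfdef]
    · have hmem : (Fin.castLE hdm i : Fin m) ∈ sf := by
        refine ⟨i.isLt, ?_⟩
        convert hz using 3
        rfl
      have hbi : f i = ‖T (e i)‖⁻¹ • T (e i) := by
        rw [hfdef]
        simp only
        rw [hb _ hmem, hvf]
        simp only [dif_pos (show ((Fin.castLE hdm i : Fin m) : ℕ) < d from i.isLt)]
        congr
      rw [hbi, hc]
      simp only
      rw [smul_smul, mul_inv_cancel₀ (norm_ne_zero_iff.2 hz), one_smul]
  set Φ : E m ≃ₗᵢ[ℝ] E m := B.repr.trans b.repr.symm with hPhi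
  have hΦB : ∀ j : Fin m, Φ (B j) = b j := by
    intro j
    rw [hPhi]
    simp [OrthonormalBasis.repr_self, OrthonormalBasis.repr_symm_single]
  refine ⟨Φ, fun x => ?_⟩
  set a : Fin d → ℝ := fun i => e.repr x i with ha
  have hxS : x = ∑ i, a i • e i := (e.sum_repr x).symm
  have hx : (x : E m) = ∑ i, a i • (e i : E m) := by
    conv_lhs => rw [hxS]
    push_cast
    rfl
  have hΦx : Φ (x : E m) = ∑ i, a i • f i := by
    rw [hx, map_sum]
    refine Finset.sum_congr rfl fun i _ => ?_
    rw [_root_.map_smul, ← hfB i, hΦB]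
  have hTx : T x = ∑ i, (a i * c i) • f i := by
    conv_lhs => rw [hxS]
    rw [map_sum]
    refine Finset.sum_congr rfl fun i _ => ?_
    rw [_root_.map_smul, hf i, smul_smul]
  have hdiff : Φ (x : E m) - T x = ∑ i, (a i * (1 - c i)) • f i := by
    rw [hΦx, hTx, ← Finset.sum_sub_distrib]
    refine Finset.sum_congr rfl fun i _ => ?_
    rw [← sub_smul]
    ring_nf
  have hnorm2 : ‖Φ (x : E m) - T x‖ ^ 2 = ∑ i, (a i * (1 - c i)) ^ 2 := by
    rw [hdiff, ← real_inner_self_eq_norm_sq]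
    rw [hf_on.inner_sum]
    refine Finset.sum_congr rfl fun i _ => ?_
    simp [sq]
  have hxnorm2 : ‖x‖ ^ 2 = ∑ i, a i ^ 2 := by
    conv_lhs => rw [hxS]
    rw [← real_inner_self_eq_norm_sq, e.orthonormal.inner_sum]
    refine Finset.sum_congr rfl fun i _ => ?_
    simp [sq]
  have hle : ‖Φ (x : E m) - T x‖ ^ 2 ≤ (δ * ‖x‖) ^ 2 := by
    rw [hnorm2]
    have : (δ * ‖x‖) ^ 2 = ∑ i, δ ^ 2 * a i ^ 2 := by
      rw [← Finset.mul_sum, ← hxnorm2]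
      ring
    rw [this]
    refine Finset.sum_le_sum fun i _ => ?_
    have h1 : (1 - c i) ^ 2 ≤ δ ^ 2 := by
      have := hc1 i
      rw [abs_sub_comm] at this
      nlinarith [abs_nonneg (1 - c i), le_abs_self (1 - c i), neg_abs_le (1 - c i)]
    nlinarith [sq_nonneg (a i)]
  calc ‖Φ (x : E m) - T x‖ = Real.sqrt (‖Φ (x : E m) - T x‖ ^ 2) :=
        (Real.sqrt_sq (norm_nonneg _)).symm
    _ ≤ Real.sqrt ((δ * ‖x‖) ^ 2) := Real.sqrt_le_sqrt hle
    _ = δ * ‖x‖ := Real.sqrt_sq (mul_nonneg hδ (norm_nonneg _))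

lemma dist_le_longEdge {m k : ℕ} (p : Fin (k+1) → E m) (a b : Fin (k+1)) :
    dist (p a) (p b) ≤ longEdge p := by
  have h1 : dist (p a) (p b) ≤ ⨆ j, dist (p a) (p j) :=
    le_ciSup (f := fun j => dist (p a) (p j)) (Set.Finite.bddAbove (Set.finite_range _)) b
  exact h1.trans (le_ciSup (f := fun i => ⨆ j, dist (p i) (p j))
    (Set.Finite.bddAbove (Set.finite_range _)) a)

lemma longEdge_nonneg {m k : ℕ} (p : Fin (k+1) → E m) : 0 ≤ longEdge p := by
  have := dist_le_longEdge p 0 0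
  simpa using this

lemma alt_eq {m k : ℕ} (p : Fin (k+1) → E m) (i₀ : Fin k) :
    altitude p i₀.succ = Metric.infDist (p i₀.succ - p 0)
      ((Submodule.span ℝ ((fun j : Fin k => p j.succ - p 0) '' {j | j ≠ i₀}) :
        Submodule ℝ (E m)) : Set (E m)) := by
  classical
  set s : Set (E m) := p '' {j | j ≠ i₀.succ} with hs
  have h0ne : (0 : Fin (k+1)) ≠ i₀.succ := (Fin.succ_ne_zero i₀).symm
  have hp0 : p 0 ∈ s := ⟨0, h0ne, rfl⟩
  have himg : (fun x : E m => x - p 0) '' (↑(affineSpan ℝ s)) =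
      ((vectorSpan ℝ s : Submodule ℝ (E m)) : Set (E m)) := by
    ext y
    constructor
    · rintro ⟨x, hx, rfl⟩
      have h2 := (AffineSubspace.vsub_right_mem_direction_iff_mem
        (mem_affineSpan ℝ hp0) x).2 hx
      rw [direction_affineSpan] at h2
      simpa [vsub_eq_sub] using h2
    · intro hy
      refine ⟨y + p 0, ?_, by simp⟩
      have h2 := (AffineSubspace.vsub_right_mem_direction_iff_mem
        (mem_affineSpan ℝ hp0) (y + p 0))
      rw [direction_affineSpan] at h2
      apply h2.1
      simpa [vsub_eq_sub] using hy
  have hset : (· -ᵥ p 0) '' s =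
      insert 0 ((fun j : Fin k => p j.succ - p 0) '' {j | j ≠ i₀}) := by
    ext y
    constructor
    · rintro ⟨x, ⟨j, hj, rfl⟩, rfl⟩
      rcases Fin.eq_zero_or_eq_succ j with rfl | ⟨j', rfl⟩
      · left; simp
      · right
        refine ⟨j', ?_, by simp [vsub_eq_sub]⟩
        intro hcon
        exact hj (by rw [hcon])
    · rintro (rfl | ⟨j', hj', rfl⟩)
      · exact ⟨p 0, ⟨0, h0ne, rfl⟩, by simp⟩
      · refine ⟨p j'.succ, ⟨j'.succ, ?_, rfl⟩, by simp [vsub_eq_sub]⟩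
        intro hcon
        exact hj' (Fin.succ_injective _ hcon)
  have hvs : vectorSpan ℝ s =
      Submodule.span ℝ ((fun j : Fin k => p j.succ - p 0) '' {j | j ≠ i₀}) := by
    rw [vectorSpan_eq_span_vsub_set_right ℝ hp0, hset, Submodule.span_insert_zero]
  have hiso : Isometry (fun x : E m => x - p 0) := by
    apply Isometry.of_dist_eq
    intro a b
    rw [dist_eq_norm, dist_eq_norm]
    congr 1
    abel
  have : altitude p i₀.succ = Metric.infDist (p i₀.succ) (↑(affineSpan ℝ s)) := rfl
  rw [this, ← Metric.infDist_image hiso, himg, hvs]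

lemma normsq_sum {m k : ℕ} (w : Fin k → E m) (c : Fin k → ℝ) :
    ‖∑ i, c i • w i‖ ^ 2 = ∑ i, ∑ j, c i * c j * ⟪w i, w j⟫ := by
  rw [← real_inner_self_eq_norm_sq, sum_inner]
  refine Finset.sum_congr rfl fun i _ => ?_
  rw [real_inner_smul_left, inner_sum, Finset.mul_sum]
  refine Finset.sum_congr rfl fun j _ => ?_
  rw [real_inner_smul_right]
  ring

set_option maxHeartbeats 2000000 in
/-- Close alignment of simplices by a rigid motion. -/
theorem stmt5 {m k : ℕ} (p q : Fin (k+1) → E m) (ξ₀ : ℝ)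
    (hξ0 : 0 ≤ ξ₀) (hξ : ξ₀ ≤ 2/3) (hnd : 0 < thickness p)
    (h : ∀ i j : Fin (k+1), i < j →
      |dist (p i) (p j) - dist (q i) (q j)| ≤ ξ₀ * longEdge p) :
    ∃ Φ : E m ≃ᵢ E m, Φ (p 0) = q 0 ∧
      ∀ i : Fin (k+1), i ≠ 0 →
        dist (Φ (p i)) (q i) ≤ 4 * Real.sqrt k * ξ₀ * longEdge p / thickness p ^ 2 := by
  classical
  rcases Nat.eq_zero_or_pos k with hk0 | hkpos
  · subst hk0
    refine ⟨IsometryEquiv.addRight (q 0 - p 0), by simp, ?_⟩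
    intro i hi
    exact absurd (Fin.ext (Nat.lt_one_iff.mp i.isLt)) hi
  -- main case
  set L := longEdge p with hLdef
  set t := thickness p with htdef
  have ht : 0 < t := hnd
  have hk0' : k ≠ 0 := hkpos.ne'
  have hL0 : 0 ≤ L := longEdge_nonneg p
  have htform : t = (⨅ i, altitude p i) / (k * L) := by
    rw [htdef, thickness, if_neg hk0']
  have hkL : 0 < (k : ℝ) * L := by
    rcases lt_or_eq_of_le (mul_nonneg (Nat.cast_nonneg k) hL0) with h' | h'
    · exact h'
    · exfalso
      rw [htform, ← h', div_zero] at ht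
      exact ht.false
  have hkR : (0:ℝ) < k := by exact_mod_cast hkpos
  have hL : 0 < L := by
    by_contra hcon
    push_neg at hcon
    nlinarith
  have hAlt : ∀ i : Fin (k+1), t * ((k:ℝ) * L) ≤ altitude p i := by
    intro i
    have hA : t * ((k:ℝ) * L) = ⨅ i, altitude p i := by
      rw [htform]
      field_simp
    rw [hA]
    exact ciInf_le (Set.Finite.bddBelow (Set.finite_range _)) i
  set u : Fin k → E m := fun i => p i.succ - p 0 with hu
  set v : Fin k → E m := fun i => q i.succ - q 0 with hv
  have hdist : ∀ a b : Fin (k+1), |dist (p a) (p b) - dist (q a) (q b)| ≤ ξ₀ * L := by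
    intro a b
    rcases lt_trichotomy a b with hab | rfl | hab
    · exact h a b hab
    · simpa using mul_nonneg hξ0 hL0
    · rw [dist_comm (p a), dist_comm (q a)]
      exact h b a hab
  have hnu : ∀ i : Fin k, ‖u i‖ ≤ L := by
    intro i
    rw [hu]
    simp only
    rw [← dist_eq_norm]
    exact dist_le_longEdge p _ _
  have hnv : ∀ i : Fin k, ‖v i‖ ≤ (1 + ξ₀) * L := by
    intro i
    have h1 := abs_le.1 (hdist i.succ 0)
    have h2 : dist (p i.succ) (p 0) ≤ L := dist_le_longEdge p _ _
    rw [hv]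
    simp only
    rw [← dist_eq_norm]
    nlinarith [h1.1, h1.2]
  have hGram : ∀ i j : Fin k, |⟪u i, u j⟫ - ⟪v i, v j⟫| ≤ 4 * ξ₀ * L ^ 2 := by
    intro i j
    have key : ∀ a b : ℝ, 0 ≤ a → 0 ≤ b → |a - b| ≤ ξ₀ * L → a ≤ L → b ≤ (1 + ξ₀) * L →
        |a ^ 2 - b ^ 2| ≤ ξ₀ * ((2 + ξ₀) * L ^ 2) := by
      intro a b ha hb hab haL hbL
      have habs : |a ^ 2 - b ^ 2| = |a - b| * (a + b) := by
        rw [← abs_of_nonneg (by linarith : (0:ℝ) ≤ a + b), ← abs_mul]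
        ring_nf
      rw [habs]
      have h1 : a + b ≤ (2 + ξ₀) * L := by nlinarith
      have h2 := mul_le_mul hab h1 (by linarith) (mul_nonneg hξ0 hL0)
      nlinarith
    have eui : ‖u i‖ = dist (p i.succ) (p 0) := by rw [hu]; simp only; rw [dist_eq_norm]
    have euj : ‖u j‖ = dist (p j.succ) (p 0) := by rw [hu]; simp only; rw [dist_eq_norm]
    have euij : ‖u i - u j‖ = dist (p i.succ) (p j.succ) := by
      rw [hu]
      simp only
      rw [dist_eq_norm]
      congr 1
      abel
    have evi : ‖v i‖ = dist (q i.succ) (q 0) := by rw [hv]; simp only; rw [dist_eq_norm]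
    have evj : ‖v j‖ = dist (q j.succ) (q 0) := by rw [hv]; simp only; rw [dist_eq_norm]
    have evij : ‖v i - v j‖ = dist (q i.succ) (q j.succ) := by
      rw [hv]
      simp only
      rw [dist_eq_norm]
      congr 1
      abel
    have hIu : ⟪u i, u j⟫ = (‖u i‖ ^ 2 + ‖u j‖ ^ 2 - ‖u i - u j‖ ^ 2) / 2 := by
      have := norm_sub_sq_real (u i) (u j)
      linarith
    have hIv : ⟪v i, v j⟫ = (‖v i‖ ^ 2 + ‖v j‖ ^ 2 - ‖v i - v j‖ ^ 2) / 2 := by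
      have := norm_sub_sq_real (v i) (v j)
      linarith
    have E1 : |‖u i‖ ^ 2 - ‖v i‖ ^ 2| ≤ ξ₀ * ((2 + ξ₀) * L ^ 2) := by
      refine key _ _ (norm_nonneg _) (norm_nonneg _) ?_ ?_ ?_
      · rw [eui, evi]; exact hdist i.succ 0
      · rw [eui]; exact dist_le_longEdge p _ _
      · exact hnv i
    have E2 : |‖u j‖ ^ 2 - ‖v j‖ ^ 2| ≤ ξ₀ * ((2 + ξ₀) * L ^ 2) := by
      refine key _ _ (norm_nonneg _) (norm_nonneg _) ?_ ?_ ?_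
      · rw [euj, evj]; exact hdist j.succ 0
      · rw [euj]; exact dist_le_longEdge p _ _
      · exact hnv j
    have E3 : |‖u i - u j‖ ^ 2 - ‖v i - v j‖ ^ 2| ≤ ξ₀ * ((2 + ξ₀) * L ^ 2) := by
      refine key _ _ (norm_nonneg _) (norm_nonneg _) ?_ ?_ ?_
      · rw [euij, evij]; exact hdist i.succ j.succ
      · rw [euij]; exact dist_le_longEdge p _ _
      · have h1 := abs_le.1 (hdist i.succ j.succ)
        have h2 : dist (p i.succ) (p j.succ) ≤ L := dist_le_longEdge p _ _
        rw [evij]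
        nlinarith [h1.1, h1.2]
    rw [hIu, hIv]
    have e0 := abs_le.1 E1
    have e1 := abs_le.1 E2
    have e2 := abs_le.1 E3
    rw [abs_le]
    constructor <;> nlinarith [mul_nonneg (mul_nonneg hξ0 hL0) hL0, sq_nonneg L,
      mul_nonneg hξ0 (sq_nonneg L)]
  have hKTL : ∀ c : Fin k → ℝ,
      (k:ℝ) * (t^2 * L^2) * (∑ i, c i ^ 2) ≤ ‖∑ i, c i • u i‖ ^ 2 := by
    intro c
    obtain ⟨i₀, -, hmax⟩ := Finset.exists_max_image Finset.univ (fun i => |c i|)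
      ⟨⟨0, hkpos⟩, Finset.mem_univ _⟩
    by_cases hc0 : c i₀ = 0
    · have hall : ∀ i, c i = 0 := by
        intro i
        have h1 := hmax i (Finset.mem_univ i)
        rw [hc0] at h1
        simp only [abs_zero] at h1
        exact abs_eq_zero.1 (le_antisymm h1 (abs_nonneg _))
      simp [hall]
    · set W : Submodule ℝ (E m) := Submodule.span ℝ (u '' {j | j ≠ i₀}) with hW
      set w : E m := ∑ j ∈ Finset.univ.erase i₀, c j • u j with hw
      have hwmem : w ∈ W := by
        rw [hw]
        refine Submodule.sum_mem _ fun j hj => Submodule.smul_mem _ _ (Submodule.subset_span ?_)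
        exact ⟨j, Finset.ne_of_mem_erase hj, rfl⟩
      have hsplit : ∑ i, c i • u i = c i₀ • u i₀ + w := by
        rw [hw]
        exact (Finset.add_sum_erase _ _ (Finset.mem_univ i₀)).symm
      have hfac : ∑ i, c i • u i = c i₀ • (u i₀ + (c i₀)⁻¹ • w) := by
        rw [hsplit, smul_add, smul_smul, mul_inv_cancel₀ hc0, one_smul]
      have hinf : Metric.infDist (u i₀) (W : Set (E m)) ≤ ‖u i₀ + (c i₀)⁻¹ • w‖ := by
        have hmem : (-((c i₀)⁻¹ • w)) ∈ (W : Set (E m)) :=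
          Submodule.neg_mem _ (Submodule.smul_mem _ _ hwmem)
        have h1 := Metric.infDist_le_dist_of_mem (x := u i₀) hmem
        rw [dist_eq_norm, sub_neg_eq_add] at h1
        exact h1
      have hnorm_ge : t * ((k:ℝ) * L) ≤ ‖u i₀ + (c i₀)⁻¹ • w‖ := by
        calc t * ((k:ℝ) * L) ≤ altitude p i₀.succ := hAlt i₀.succ
          _ = Metric.infDist (u i₀) (W : Set (E m)) := alt_eq p i₀
          _ ≤ _ := hinf
      have hxnorm : ‖∑ i, c i • u i‖ = |c i₀| * ‖u i₀ + (c i₀)⁻¹ • w‖ := by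
        rw [hfac, norm_smul, Real.norm_eq_abs]
      have hsumsq : ∑ i, c i ^ 2 ≤ (k:ℝ) * c i₀ ^ 2 := by
        calc ∑ i, c i ^ 2 ≤ ∑ _i : Fin k, c i₀ ^ 2 := by
              refine Finset.sum_le_sum fun i _ => ?_
              have h1 := hmax i (Finset.mem_univ i)
              nlinarith [abs_nonneg (c i), abs_nonneg (c i₀), sq_abs (c i), sq_abs (c i₀)]
          _ = (k:ℝ) * c i₀ ^ 2 := by
              rw [Finset.sum_const, Finset.card_univ, Fintype.card_fin, nsmul_eq_mul]
      have hN0 : 0 ≤ ‖u i₀ + (c i₀)⁻¹ • w‖ := norm_nonneg _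
      have h2' : (t * ((k:ℝ) * L)) ^ 2 ≤ ‖u i₀ + (c i₀)⁻¹ • w‖ ^ 2 := by
        nlinarith [mul_nonneg (mul_nonneg ht.le (Nat.cast_nonneg k : (0:ℝ) ≤ k)) hL0]
      have hc2 : (0:ℝ) ≤ (k:ℝ) * (t^2 * L^2) := by positivity
      calc (k:ℝ) * (t^2 * L^2) * (∑ i, c i ^ 2)
          ≤ (k:ℝ) * (t^2 * L^2) * ((k:ℝ) * c i₀ ^ 2) :=
            mul_le_mul_of_nonneg_left hsumsq hc2
        _ = c i₀ ^ 2 * (t * ((k:ℝ) * L)) ^ 2 := by ring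
        _ ≤ c i₀ ^ 2 * ‖u i₀ + (c i₀)⁻¹ • w‖ ^ 2 :=
            mul_le_mul_of_nonneg_left h2' (sq_nonneg _)
        _ = ‖∑ i, c i • u i‖ ^ 2 := by rw [hxnorm, mul_pow, sq_abs]
  have hpos : (0:ℝ) < (k:ℝ) * (t^2 * L^2) := by positivity
  have hind : LinearIndependent ℝ u := by
    rw [Fintype.linearIndependent_iff]
    intro g hg i
    have h1 := hKTL g
    rw [hg] at h1
    simp only [norm_zero] at h1
    have hsum0 : ∑ j, g j ^ 2 ≤ 0 := by nlinarith
    have h2 : g i ^ 2 ≤ 0 :=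
      le_trans (Finset.single_le_sum (fun j _ => sq_nonneg (g j)) (Finset.mem_univ i)) hsum0
    nlinarith [sq_nonneg (g i)]
  set S : Submodule ℝ (E m) := Submodule.span ℝ (Set.range u) with hS
  set BS : Module.Basis (Fin k) ℝ S := Module.Basis.span hind with hBS
  set T : S →ₗ[ℝ] E m := BS.constr ℝ v with hT
  have hTu : ∀ i, T (BS i) = v i := fun i => BS.constr_basis ℝ v i
  have hBSu : ∀ i, (BS i : E m) = u i := fun i => congrArg Subtype.val (Module.Basis.span_apply hind i)
  set δ : ℝ := 4 * ξ₀ / t^2 with hδdef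
  have hδ0 : 0 ≤ δ := by positivity
  have hncoe : ∀ x : S, ‖(x : E m)‖ = ‖x‖ := fun x => rfl
  have hTsub : ∀ x : S, |‖T x‖^2 - ‖x‖^2| ≤ δ * ‖x‖^2 := by
    intro x
    set cc : Fin k → ℝ := fun i => BS.repr x i with hcc
    have hxrep : x = ∑ i, cc i • BS i := (BS.sum_repr x).symm
    have hxcoe : (x : E m) = ∑ i, cc i • u i := by
      conv_lhs => rw [hxrep]
      push_cast
      simp [hBSu]
    have hTx : T x = ∑ i, cc i • v i := by
      conv_lhs => rw [hxrep]
      rw [map_sum]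
      simp only [_root_.map_smul]
      exact Finset.sum_congr rfl fun i _ => by rw [hTu]
    have h1 : ‖T x‖^2 = ∑ i, ∑ j, cc i * cc j * ⟪v i, v j⟫ := by rw [hTx, normsq_sum]
    have h2 : ‖x‖^2 = ∑ i, ∑ j, cc i * cc j * ⟪u i, u j⟫ := by
      rw [← hncoe x, hxcoe, normsq_sum]
    conv_lhs => rw [h1, h2]
    have h3 : |(∑ i, ∑ j, cc i * cc j * ⟪v i, v j⟫) - ∑ i, ∑ j, cc i * cc j * ⟪u i, u j⟫|
        ≤ ∑ i, ∑ j, |cc i| * |cc j| * (4 * ξ₀ * L ^ 2) := by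
      rw [← Finset.sum_sub_distrib]
      refine (Finset.abs_sum_le_sum_abs _ _).trans (Finset.sum_le_sum fun i _ => ?_)
      rw [← Finset.sum_sub_distrib]
      refine (Finset.abs_sum_le_sum_abs _ _).trans (Finset.sum_le_sum fun j _ => ?_)
      have e1 : cc i * cc j * ⟪v i, v j⟫ - cc i * cc j * ⟪u i, u j⟫
          = (cc i * cc j) * (⟪v i, v j⟫ - ⟪u i, u j⟫) := by ring
      rw [e1, abs_mul, abs_mul]
      have hg := hGram i j
      rw [abs_sub_comm] at hg
      exact mul_le_mul_of_nonneg_left hg (mul_nonneg (abs_nonneg _) (abs_nonneg _))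
    have h4 : ∑ i, ∑ j, |cc i| * |cc j| * (4 * ξ₀ * L ^ 2)
        = (4 * ξ₀ * L ^ 2) * (∑ i, |cc i|) ^ 2 := by
      symm
      rw [pow_two (∑ i, |cc i|), Finset.sum_mul_sum, Finset.mul_sum]
      refine Finset.sum_congr rfl fun i _ => ?_
      rw [Finset.mul_sum]
      refine Finset.sum_congr rfl fun j _ => ?_
      ring
    have h5 : (∑ i, |cc i|) ^ 2 ≤ (k:ℝ) * ∑ i, cc i ^ 2 := by
      have h6 := sq_sum_le_card_mul_sum_sq (s := (Finset.univ : Finset (Fin k)))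
        (f := fun i => |cc i|)
      simpa [sq_abs] using h6
    have h6 := hKTL cc
    calc |(∑ i, ∑ j, cc i * cc j * ⟪v i, v j⟫) - ∑ i, ∑ j, cc i * cc j * ⟪u i, u j⟫|
        ≤ (4 * ξ₀ * L ^ 2) * (∑ i, |cc i|) ^ 2 := by rw [← h4]; exact h3
      _ ≤ (4 * ξ₀ * L ^ 2) * ((k:ℝ) * ∑ i, cc i ^ 2) :=
          mul_le_mul_of_nonneg_left h5 (by positivity)
      _ = δ * ((k:ℝ) * (t^2 * L^2) * (∑ i, cc i ^ 2)) := by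
          rw [hδdef]
          field_simp
      _ ≤ δ * ‖x‖^2 := by
          refine mul_le_mul_of_nonneg_left ?_ hδ0
          rw [← hncoe x, hxcoe]
          exact h6
  obtain ⟨Φ₀, hΦ₀⟩ := align S T δ hδ0 hTsub
  refine ⟨((IsometryEquiv.addRight (-(p 0))).trans Φ₀.toIsometryEquiv).trans
      (IsometryEquiv.addRight (q 0)), ?_, ?_⟩
  · simp
  · intro i hi
    induction i using Fin.cases with
    | zero => exact absurd rfl hi
    | succ j =>
      set xS : S := ⟨u j, Submodule.subset_span ⟨j, rfl⟩⟩ with hxS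
      have hxBS : xS = BS j := Subtype.ext (hBSu j).symm
      have hTxS : T xS = v j := by rw [hxBS]; exact hTu j
      have hb := hΦ₀ xS
      rw [hTxS] at hb
      have hnx : ‖xS‖ ≤ L := by
        rw [← hncoe xS]
        exact hnu j
      have hΦval : (((IsometryEquiv.addRight (-(p 0))).trans Φ₀.toIsometryEquiv).trans
          (IsometryEquiv.addRight (q 0))) (p j.succ) = Φ₀ (u j) + q 0 := by
        simp [hu, sub_eq_add_neg]
      rw [hΦval, dist_eq_norm]
      have e2 : Φ₀ (u j) + q 0 - q j.succ = Φ₀ (u j) - v j := by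
        rw [hv]
        simp only
        abel
      rw [e2]
      have hstep : ‖Φ₀ (u j) - v j‖ ≤ δ * L := by
        have h7 : ‖Φ₀ ((xS : E m)) - v j‖ ≤ δ * ‖xS‖ := hb
        have h8 : δ * ‖xS‖ ≤ δ * L := mul_le_mul_of_nonneg_left hnx hδ0
        exact le_trans h7 h8
      refine hstep.trans ?_
      have hsk : 1 ≤ Real.sqrt k := by
        rw [show (1:ℝ) = Real.sqrt 1 by simp]
        exact Real.sqrt_le_sqrt (by exact_mod_cast hkpos)
      have hfin : δ * L ≤ 4 * Real.sqrt k * ξ₀ * L / t ^ 2 := by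
        rw [hδdef]
        rw [div_mul_eq_mul_div, div_le_div_iff₀ (by positivity) (by positivity)]
        nlinarith [mul_nonneg (mul_nonneg hξ0 hL0) (sq_nonneg t),
          mul_nonneg (mul_nonneg (mul_nonneg hξ0 hL0) (sq_nonneg t)) (Real.sqrt_nonneg k)]
      exact hfin
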